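/- Let $r,s\ge 0$ be integers, let $\lambda_1,\dots,\lambda_r\in(-1,0)\cup(0,1)$ be distinct, let $\gamma_1,\dots,\gamma_s\in(0,1)$ be distinct, and let $\varphi_1,\dots,\varphi_s\in(0,\pi)$. Suppose $c_1,\dots,c_r,c_{11},c_{12},\dots,c_{s1},c_{s2}$ are real numbers such that for every positive integer $m$, $\sum_{i=1}^r c_i\lambda_i^m+\sum_{k=1}^s\big[c_{k1}\gamma_k^m\cos(m\varphi_k)+c_{k2}\gamma_k^m\sin(m\varphi_k)\big]=0$. Then all coefficients $c_i$, $c_{k1}$, $c_{k2}$ are zero. -/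

import Mathlib

open Complex in
lemma vand_fin {n : ℕ} (v : Fin n → ℂ) (hv : Function.Injective v) (h0 : ∀ j, v j ≠ 0)
    (a : Fin n → ℂ) (ha : ∀ m : ℕ, 1 ≤ m → ∑ j, a j * v j ^ m = 0) : ∀ j, a j = 0 := by
  have key : (fun j => a j * v j) = 0 := by
    apply Matrix.eq_zero_of_forall_pow_sum_mul_pow_eq_zero hv
    intro i
    have := ha ((i : ℕ) + 1) (Nat.le_add_left 1 _)
    simpa [pow_succ, mul_assoc, mul_comm, mul_left_comm] using this
  intro j
  have := congrFun key j
  simp only [Pi.zero_apply, mul_eq_zero] at this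
  exact this.resolve_right (h0 j)

lemma vand_gen {ι : Type*} [Fintype ι] (v : ι → ℂ) (hv : Function.Injective v)
    (h0 : ∀ j, v j ≠ 0) (a : ι → ℂ)
    (ha : ∀ m : ℕ, 1 ≤ m → ∑ j, a j * v j ^ m = 0) : ∀ j, a j = 0 := by
  classical
  let e := Fintype.equivFin ι
  intro j
  have := vand_fin (v ∘ e.symm) (hv.comp e.symm.injective) (fun j => h0 _)
    (a ∘ e.symm) (fun m hm => by
      rw [← ha m hm]
      exact Fintype.sum_equiv e.symm _ _ (fun j => rfl)) (e j)
  simpa using this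

lemma expI (x : ℝ) :
    Complex.exp (x * Complex.I) = (Real.cos x : ℂ) + (Real.sin x : ℂ) * Complex.I := by
  rw [Complex.exp_mul_I, Complex.ofReal_cos, Complex.ofReal_sin]

lemma gpow (g x : ℝ) (m : ℕ) :
    ((g : ℂ) * Complex.exp (x * Complex.I)) ^ m
      = ((g ^ m : ℝ) : ℂ) * ((Real.cos (m * x) : ℂ) + (Real.sin (m * x) : ℂ) * Complex.I) := by
  rw [mul_pow, ← Complex.exp_nat_mul, ← expI (m * x)]
  push_cast
  ring_nf

lemma pairsum (A B C D E : ℝ) :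
    ((A : ℂ) - B * Complex.I) / 2 * ((E : ℂ) * ((C : ℂ) + (D : ℂ) * Complex.I))
      + ((A : ℂ) + B * Complex.I) / 2 * ((E : ℂ) * ((C : ℂ) - (D : ℂ) * Complex.I))
      = ((A * E * C + B * E * D : ℝ) : ℂ) := by
  push_cast
  linear_combination (-(B : ℂ) * E * D) * Complex.I_sq

theorem stmt4 (r s : ℕ)
    (lam : Fin r → ℝ) (hlam : ∀ i, lam i ∈ Set.Ioo (-1 : ℝ) 0 ∪ Set.Ioo (0 : ℝ) 1)
    (hlamd : Function.Injective lam)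
    (gam : Fin s → ℝ) (hgam : ∀ j, gam j ∈ Set.Ioo (0 : ℝ) 1)
    (hgamd : Function.Injective gam)
    (phi : Fin s → ℝ) (hphi : ∀ j, phi j ∈ Set.Ioo (0 : ℝ) Real.pi)
    (c : Fin r → ℝ) (c1 c2 : Fin s → ℝ)
    (h : ∀ m : ℕ, 1 ≤ m →
      (∑ i, c i * lam i ^ m) +
        (∑ k, (c1 k * gam k ^ m * Real.cos (m * phi k) +
               c2 k * gam k ^ m * Real.sin (m * phi k))) = 0) :
    (∀ i, c i = 0) ∧ (∀ k, c1 k = 0) ∧ (∀ k, c2 k = 0) := by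
  classical
  have hlam0 : ∀ i, lam i ≠ 0 := by
    intro i; rcases hlam i with hi | hi
    · exact ne_of_lt hi.2
    · exact ne_of_gt hi.1
  have hgam0 : ∀ k, gam k > 0 := fun k => (hgam k).1
  have hsin : ∀ k, Real.sin (phi k) > 0 := fun k =>
    Real.sin_pos_of_pos_of_lt_pi (hphi k).1 (hphi k).2
  set v : Fin r ⊕ (Fin s ⊕ Fin s) → ℂ := fun j =>
    match j with
    | .inl i => (lam i : ℂ)
    | .inr (.inl k) => (gam k : ℂ) * Complex.exp ((phi k : ℝ) * Complex.I)
    | .inr (.inr k) => (gam k : ℂ) * Complex.exp ((-(phi k) : ℝ) * Complex.I) with hv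
  set a : Fin r ⊕ (Fin s ⊕ Fin s) → ℂ := fun j =>
    match j with
    | .inl i => (c i : ℂ)
    | .inr (.inl k) => ((c1 k : ℂ) - (c2 k : ℂ) * Complex.I) / 2
    | .inr (.inr k) => ((c1 k : ℂ) + (c2 k : ℂ) * Complex.I) / 2 with ha
  -- imaginary parts and absolute values
  have him0 : ∀ i, (v (.inl i)).im = 0 := by
    intro i; simp [hv]
  have him1 : ∀ k, (v (.inr (.inl k))).im = gam k * Real.sin (phi k) := by
    intro k
    show ((gam k : ℂ) * Complex.exp ((phi k : ℝ) * Complex.I)).im = _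
    rw [expI (phi k)]
    simp [Complex.sin_ofReal_re, Complex.cos_ofReal_re, Complex.sin_ofReal_im,
      Complex.cos_ofReal_im]
  have him2 : ∀ k, (v (.inr (.inr k))).im = -(gam k * Real.sin (phi k)) := by
    intro k
    show ((gam k : ℂ) * Complex.exp ((-(phi k) : ℝ) * Complex.I)).im = _
    rw [expI (-(phi k))]
    simp [Real.sin_neg, Real.cos_neg, Complex.sin_ofReal_re, Complex.cos_ofReal_re,
      Complex.sin_ofReal_im, Complex.cos_ofReal_im]
  have habs1 : ∀ k, ‖v (.inr (.inl k))‖ = gam k := by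
    intro k
    show ‖(gam k : ℂ) * Complex.exp ((phi k : ℝ) * Complex.I)‖ = _
    rw [norm_mul, Complex.norm_exp_ofReal_mul_I]
    simp [abs_of_pos (hgam0 k)]
  have habs2 : ∀ k, ‖v (.inr (.inr k))‖ = gam k := by
    intro k
    show ‖(gam k : ℂ) * Complex.exp ((-(phi k) : ℝ) * Complex.I)‖ = _
    rw [norm_mul, Complex.norm_exp_ofReal_mul_I]
    simp [abs_of_pos (hgam0 k)]
  have hpos : ∀ k, 0 < gam k * Real.sin (phi k) :=
    fun k => mul_pos (hgam0 k) (hsin k)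
  have hvinj : Function.Injective v := by
    intro x y hxy
    match x, y with
    | .inl i, .inl i' =>
      simp only [hv, Complex.ofReal_inj] at hxy
      exact congrArg _ (hlamd hxy)
    | .inl i, .inr (.inl k) =>
      exfalso
      have := congrArg Complex.im hxy
      rw [him0, him1] at this
      nlinarith [hpos k]
    | .inl i, .inr (.inr k) =>
      exfalso
      have := congrArg Complex.im hxy
      rw [him0, him2] at this
      nlinarith [hpos k]
    | .inr (.inl k), .inl i =>
      exfalso
      have := congrArg Complex.im hxy
      rw [him0, him1] at this
      nlinarith [hpos k]
    | .inr (.inr k), .inl i =>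
      exfalso
      have := congrArg Complex.im hxy
      rw [him0, him2] at this
      nlinarith [hpos k]
    | .inr (.inl k), .inr (.inl k') =>
      have := congrArg (‖·‖) hxy
      rw [habs1, habs1] at this
      exact congrArg _ (congrArg _ (hgamd this))
    | .inr (.inr k), .inr (.inr k') =>
      have := congrArg (‖·‖) hxy
      rw [habs2, habs2] at this
      exact congrArg _ (congrArg _ (hgamd this))
    | .inr (.inl k), .inr (.inr k') =>
      exfalso
      have := congrArg Complex.im hxy
      rw [him1, him2] at this
      have := this.symm.le
      nlinarith [hpos k, hpos k']
    | .inr (.inr k), .inr (.inl k') =>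
      exfalso
      have := congrArg Complex.im hxy
      rw [him2, him1] at this
      nlinarith [hpos k, hpos k']
  have hv0 : ∀ j, v j ≠ 0 := by
    intro j
    match j with
    | .inl i => simpa [hv] using hlam0 i
    | .inr (.inl k) =>
      intro h0
      have := habs1 k
      rw [h0] at this
      simp at this
      exact absurd this.symm (ne_of_gt (hgam0 k))
    | .inr (.inr k) =>
      intro h0
      have := habs2 k
      rw [h0] at this
      simp at this
      exact absurd this.symm (ne_of_gt (hgam0 k))
  have hsum : ∀ m : ℕ, 1 ≤ m → ∑ j, a j * v j ^ m = 0 := by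
    intro m hm
    rw [Fintype.sum_sum_type, Fintype.sum_sum_type, ← Finset.sum_add_distrib]
    have e1 : ∀ i : Fin r, a (.inl i) * v (.inl i) ^ m = ((c i * lam i ^ m : ℝ) : ℂ) := by
      intro i; simp [ha, hv]
    have e2 : ∀ k : Fin s,
        a (.inr (.inl k)) * v (.inr (.inl k)) ^ m
          + a (.inr (.inr k)) * v (.inr (.inr k)) ^ m
        = ((c1 k * gam k ^ m * Real.cos (m * phi k)
            + c2 k * gam k ^ m * Real.sin (m * phi k) : ℝ) : ℂ) := by
      intro k
      show ((c1 k : ℂ) - (c2 k : ℂ) * Complex.I) / 2 * _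
            + ((c1 k : ℂ) + (c2 k : ℂ) * Complex.I) / 2 * _ = _
      rw [gpow, gpow]
      have hneg : m * -(phi k) = -(m * phi k) := by ring
      rw [hneg, Real.cos_neg, Real.sin_neg, Complex.ofReal_neg]
      rw [show ((gam k ^ m : ℝ) : ℂ) * ((Real.cos (m * phi k) : ℂ)
            + -(Real.sin (m * phi k) : ℂ) * Complex.I)
          = ((gam k ^ m : ℝ) : ℂ) * ((Real.cos (m * phi k) : ℂ)
            - (Real.sin (m * phi k) : ℂ) * Complex.I) by ring]
      rw [pairsum]
    simp only [e1]
    rw [Finset.sum_congr rfl (fun k _ => e2 k)]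
    rw [← Complex.ofReal_sum, ← Complex.ofReal_sum, ← Complex.ofReal_add]
    rw [h m hm, Complex.ofReal_zero]
  have hz := vand_gen v hvinj hv0 a hsum
  refine ⟨fun i => ?_, fun k => ?_, fun k => ?_⟩
  · have := hz (.inl i)
    simpa [ha] using this
  · have := hz (.inr (.inl k))
    simp only [ha, div_eq_zero_iff, OfNat.ofNat_ne_zero, or_false, sub_eq_zero] at this
    have hre := congrArg Complex.re this
    simpa using hre
  · have := hz (.inr (.inl k))
    simp only [ha, div_eq_zero_iff, OfNat.ofNat_ne_zero, or_false, sub_eq_zero] at this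
    have him := congrArg Complex.im this
    simpa using him.symm
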